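/- arXiv:2407.06589 — 7 statements merged into one kernel-verified Lean document; each statement's English description precedes it below -/
import Mathlib

section
/- If $(A, \cdot, R)$ is an associative algebra with a Rota--Baxter operator $R$ of weight 0, then the operations $a \prec b := a \cdot R(b)$ and $a \succ b := R(a) \cdot b$ make $A$ into a dendriform algebra, i.e. they satisfy $(a_1\prec a_2)\prec a_3 = a_1\prec(a_2\prec a_3 + a_2\succ a_3)$, $(a_1\succ a_2)\prec a_3 = a_1\succ(a_2\prec a_3)$, and $(a_1\prec a_2 + a_1\succ a_2)\succ a_3 = a_1\succ(a_2\succ a_3)$. -/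
/-- A Rota–Baxter operator of weight 0 on an associative algebra
induces a dendriform algebra structure via `a ≺ b = a·R(b)`, `a ≻ b = R(a)·b`. -/
theorem dendriform_of_rotaBaxter
    (k : Type*) (A : Type*) [Field k] [CharZero k] [Ring A] [Algebra k A]
    (R : A →ₗ[k] A)
    (hR : ∀ a b : A, R a * R b = R (R a * b + a * R b)) :
    (∀ a₁ a₂ a₃ : A, (a₁ * R a₂) * R a₃ = a₁ * R (a₂ * R a₃ + R a₂ * a₃)) ∧
    (∀ a₁ a₂ a₃ : A, (R a₁ * a₂) * R a₃ = R a₁ * (a₂ * R a₃)) ∧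
    (∀ a₁ a₂ a₃ : A, R (a₁ * R a₂ + R a₁ * a₂) * a₃ = R a₁ * (R a₂ * a₃)) := by
  refine ⟨fun a₁ a₂ a₃ => ?_, fun a₁ a₂ a₃ => mul_assoc _ _ _, fun a₁ a₂ a₃ => ?_⟩
  · rw [mul_assoc, hR, add_comm]
  · rw [add_comm, ← hR, mul_assoc]
end

section
/- Let $L = \bigoplus_{n>0} L_n$ be a Lie algebra over a field of characteristic zero with a strictly positive integer grading ($[L_m, L_n] \subseteq L_{m+n}$). Then the bilinear operation defined on homogeneous elements by $x \triangleleft y := \frac{|x|}{|x|+|y|}[x,y]$ satisfies the (right) pre-Lie identity $(x\triangleleft y)\triangleleft z - x\triangleleft(y\triangleleft z) = (x\triangleleft z)\triangleleft y - x\triangleleft(z\triangleleft y)$. -/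
/-- The Foissy operation `x ◁ y = |x|/(|x|+|y|) [x,y]` on homogeneous elements of a
positively graded Lie algebra, written with explicit degrees. -/
noncomputable def foissyOp (k : Type*) {G : Type*} [Field k] [LieRing G] [LieAlgebra k G]
    (m n : ℕ) (x y : G) : G :=
  (((m : k) / ((m : k) + (n : k)))) • ⁅x, y⁆

/-- for a Lie algebra `L = ⨁_{n>0} L n` over a field of characteristic
zero, the operation `x ◁ y := |x|/(|x|+|y|)·[x,y]` on homogeneous elements satisfies
the right pre-Lie identity. -/
theorem foissy_preLie
    (k : Type*) (G : Type*) [Field k] [CharZero k] [LieRing G] [LieAlgebra k G]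
    (L : ℕ → Submodule k G)
    (hgr : ∀ m n : ℕ, ∀ x y : G, x ∈ L m → y ∈ L n → ⁅x, y⁆ ∈ L (m + n))
    (a b c : ℕ) (ha : 0 < a) (hb : 0 < b) (hc : 0 < c)
    (x y z : G) (hx : x ∈ L a) (hy : y ∈ L b) (hz : z ∈ L c) :
    foissyOp k (a + b) c (foissyOp k a b x y) z - foissyOp k a (b + c) x (foissyOp k b c y z)
      = foissyOp k (a + c) b (foissyOp k a c x z) y
        - foissyOp k a (c + b) x (foissyOp k c b z y) := by
  have hA : ((a : k)) ≠ 0 := Nat.cast_ne_zero.mpr ha.ne'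
  have hB : ((b : k)) ≠ 0 := Nat.cast_ne_zero.mpr hb.ne'
  have hC : ((c : k)) ≠ 0 := Nat.cast_ne_zero.mpr hc.ne'
  have hab : (a : k) + b ≠ 0 := by
    rw [← Nat.cast_add]; exact Nat.cast_ne_zero.mpr (by omega)
  have hbc : (b : k) + c ≠ 0 := by
    rw [← Nat.cast_add]; exact Nat.cast_ne_zero.mpr (by omega)
  have hac : (a : k) + c ≠ 0 := by
    rw [← Nat.cast_add]; exact Nat.cast_ne_zero.mpr (by omega)
  have habc : (a : k) + b + c ≠ 0 := by
    rw [← Nat.cast_add, ← Nat.cast_add]; exact Nat.cast_ne_zero.mpr (by omega)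
  have d1 : (a : k) * b + a * c * 2 + a ^ 2 + b * c + c ^ 2 ≠ 0 := fun h =>
    mul_ne_zero hac habc (by linear_combination h)
  have d2 : (a : k) * b + a * c + b * c * 2 + b ^ 2 + c ^ 2 ≠ 0 := fun h =>
    mul_ne_zero hbc habc (by linear_combination h)
  have d3 : (a : k) * b * 2 + a * c + a ^ 2 + b * c + b ^ 2 ≠ 0 := fun h =>
    mul_ne_zero hab habc (by linear_combination h)
  have h1 : ⁅⁅x, z⁆, y⁆ = ⁅⁅x, y⁆, z⁆ - ⁅x, ⁅y, z⁆⁆ := by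
    rw [eq_sub_iff_add_eq, ← lie_skew ⁅x, z⁆ y, lie_lie]
    abel
  have h3 : ⁅z, y⁆ = -⁅y, z⁆ := by rw [← lie_skew]
  simp only [foissyOp, lie_smul 
    , smul_lie, smul_smul, h1, h3, lie_neg, Nat.cast_add]
  have hcb : (c : k) + b ≠ 0 := by rw [add_comm]; exact hbc
  have habc2 : (a : k) + (b + c) ≠ 0 := by rw [← add_assoc]; exact habc
  have habc3 : (a : k) + c + b ≠ 0 := by rw [add_right_comm]; exact habc
  have habc4 : (a : k) + (c + b) ≠ 0 := by rw [← add_assoc]; exact habc3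
  match_scalars <;> field_simp <;> ring
end

section
/- In a Lie algebra, if $f_1, \ldots, f_n$ are elements such that all iterated brackets are defined, then for any element $x$, $[\,[\cdots[[f_{i_1}, f_{i_2}], f_{i_3}]\cdots, f_{i_n}]^{op}, x]$ expands as follows: $[\mathrm{ad}_{f_n}\mathrm{ad}_{f_{n-1}}\cdots\mathrm{ad}_{f_2}(f_1),\, x] = \sum_{\sigma \in I_n} (-1)^{\sigma^{-1}(1)-1}\, \mathrm{ad}_{f_{\sigma(n)}}\mathrm{ad}_{f_{\sigma(n-1)}}\cdots\mathrm{ad}_{f_{\sigma(1)}}(x)$, where $I_n \subset S_n$ is the set of V-shaped permutations. -/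
/-- `adChain g x = ad_{g (n-1)} ∘ ⋯ ∘ ad_{g 0} (x)` in a Lie ring. -/
def adChain {L : Type*} [LieRing L] : ∀ {n : ℕ}, (Fin n → L) → L → L :=
  fun {n} g x => (List.finRange n).foldl (fun a i => ⁅g i, a⁆) x

/-- V-shaped permutations: `σ` strictly decreases until it hits the minimum value `0`
and strictly increases afterwards. -/
def VShaped {n : ℕ} (σ : Equiv.Perm (Fin (n + 1))) : Prop :=
  (∀ i j : Fin (n + 1), i < j → j ≤ σ⁻¹ 0 → σ j < σ i) ∧
  (∀ i j : Fin (n + 1), σ⁻¹ 0 ≤ i → i < j → σ i < σ j)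

instance {n : ℕ} : DecidablePred (VShaped (n := n)) := fun σ => by
  unfold VShaped; infer_instance

namespace VAux

variable {L : Type*} [LieRing L]

lemma perm_apply_inv_self {α : Type*} (f : Equiv.Perm α) (x : α) : f (f⁻¹ x) = x :=
  f.apply_symm_apply x

lemma adChain_zero (g : Fin 0 → L) (x : L) : adChain g x = x := rfl

lemma adChain_succ_last {n : ℕ} (g : Fin (n + 1) → L) (x : L) :
    adChain g x = ⁅g (Fin.last n), adChain (g ∘ Fin.castSucc) x⁆ := by
  unfold adChain
  rw [List.finRange_succ_last, List.foldl_append, List.foldl_map]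
  rfl

lemma adChain_succ_zero {n : ℕ} (g : Fin (n + 1) → L) (x : L) :
    adChain g x = adChain (g ∘ Fin.succ) ⁅g 0, x⁆ := by
  unfold adChain
  rw [List.finRange_succ, List.foldl_cons, List.foldl_map]
  rfl

lemma lie_finset_sum {ι : Type*} (a : L) (s : Finset ι) (u : ι → L) :
    ⁅a, ∑ i ∈ s, u i⁆ = ∑ i ∈ s, ⁅a, u i⁆ := by
  classical
  induction s using Finset.cons_induction with
  | empty => simp
  | cons i s hi ih => rw [Finset.sum_cons, Finset.sum_cons, lie_add, ih]

/-- extension of a permutation fixing the last point -/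
def extA {n : ℕ} (τ : Equiv.Perm (Fin (n + 1))) : Equiv.Perm (Fin (n + 2)) :=
  (Equiv.permCongr finSuccEquivLast.symm) τ.optionCongr

@[simp] lemma extA_castSucc {n : ℕ} (τ : Equiv.Perm (Fin (n + 1))) (i : Fin (n + 1)) :
    extA τ (Fin.castSucc i) = Fin.castSucc (τ i) := by
  simp [extA, Equiv.permCongr_apply]

@[simp] lemma extA_last {n : ℕ} (τ : Equiv.Perm (Fin (n + 1))) :
    extA τ (Fin.last (n + 1)) = Fin.last (n + 1) := by
  simp [extA, Equiv.permCongr_apply]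

lemma inv_extA_zero {n : ℕ} (τ : Equiv.Perm (Fin (n + 1))) :
    (extA τ)⁻¹ 0 = Fin.castSucc (τ⁻¹ 0) := by
  rw [eq_comm, Equiv.Perm.eq_inv_iff_eq]
  rw [extA_castSucc, perm_apply_inv_self, Fin.castSucc_zero]

lemma extA_injective {n : ℕ} : Function.Injective (extA (n := n)) := by
  intro τ τ' h
  apply Equiv.ext; intro i
  have := congrFun (congrArg (fun e => (e : Equiv.Perm (Fin (n+2))) ∘ Fin.castSucc) h) i
  simpa [Fin.castSucc_inj] using this

/-- extension of a permutation putting the last value first -/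
def extB {n : ℕ} (τ : Equiv.Perm (Fin (n + 1))) : Equiv.Perm (Fin (n + 2)) :=
  extA τ * (finRotate (n + 2))⁻¹

@[simp] lemma extB_zero {n : ℕ} (τ : Equiv.Perm (Fin (n + 1))) :
    extB τ 0 = Fin.last (n + 1) := by
  have h : (finRotate (n + 2))⁻¹ 0 = Fin.last (n + 1) := by
    rw [eq_comm, Equiv.Perm.eq_inv_iff_eq, finRotate_last]
  simp [extB, Equiv.Perm.mul_apply, h]

@[simp] lemma extB_succ {n : ℕ} (τ : Equiv.Perm (Fin (n + 1))) (i : Fin (n + 1)) :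
    extB τ i.succ = Fin.castSucc (τ i) := by
  have h : (finRotate (n + 2))⁻¹ i.succ = Fin.castSucc i := by
    rw [eq_comm, Equiv.Perm.eq_inv_iff_eq, finRotate_succ_apply, Fin.coeSucc_eq_succ]
  simp [extB, Equiv.Perm.mul_apply, h]

lemma inv_extB_zero {n : ℕ} (τ : Equiv.Perm (Fin (n + 1))) :
    (extB τ)⁻¹ 0 = (τ⁻¹ 0).succ := by
  rw [eq_comm, Equiv.Perm.eq_inv_iff_eq]
  rw [extB_succ, perm_apply_inv_self, Fin.castSucc_zero]

lemma extB_injective {n : ℕ} : Function.Injective (extB (n := n)) := by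
  intro τ τ' h
  exact extA_injective (mul_right_cancel h)

lemma vshaped_extA {n : ℕ} (τ : Equiv.Perm (Fin (n + 1))) :
    VShaped (extA τ) ↔ VShaped τ := by
  constructor
  · rintro ⟨h1, h2⟩
    constructor
    · intro i j hij hj
      have := h1 (Fin.castSucc i) (Fin.castSucc j) (by simpa using hij)
        (by rw [inv_extA_zero]; simpa using hj)
      simpa using this
    · intro i j hi hij
      have := h2 (Fin.castSucc i) (Fin.castSucc j)
        (by rw [inv_extA_zero]; simpa using hi) (by simpa using hij)
      simpa using this
  · rintro ⟨h1, h2⟩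
    rw [VShaped, inv_extA_zero]
    constructor
    · intro i j hij hj
      induction j using Fin.lastCases with
      | last => exact absurd (lt_of_le_of_lt hj (Fin.castSucc_lt_last _)) (lt_irrefl _)
      | cast j' =>
        induction i using Fin.lastCases with
        | last => exact absurd (lt_trans hij (Fin.castSucc_lt_last _)) (lt_irrefl _)
        | cast i' =>
          rw [extA_castSucc, extA_castSucc, Fin.castSucc_lt_castSucc_iff]
          exact h1 i' j' (by simpa using hij) (by simpa using hj)
    · intro i j hi hij
      induction j using Fin.lastCases with
      | last =>
        induction i using Fin.lastCases with
        | last => exact absurd hij (lt_irrefl _)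
        | cast i' => rw [extA_castSucc, extA_last]; exact Fin.castSucc_lt_last _
      | cast j' =>
        induction i using Fin.lastCases with
        | last => exact absurd (lt_trans (Fin.castSucc_lt_last _) hij) (lt_irrefl _)
        | cast i' =>
          rw [extA_castSucc, extA_castSucc, Fin.castSucc_lt_castSucc_iff]
          exact h2 i' j' (by simpa using hi) (by simpa using hij)

lemma vshaped_extB {n : ℕ} (τ : Equiv.Perm (Fin (n + 1))) :
    VShaped (extB τ) ↔ VShaped τ := by
  constructor
  · rintro ⟨h1, h2⟩
    constructor
    · intro i j hij hj
      have := h1 i.succ j.succ (by simpa using hij)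
        (by rw [inv_extB_zero]; simpa using hj)
      simpa using this
    · intro i j hi hij
      have := h2 i.succ j.succ
        (by rw [inv_extB_zero]; simpa using hi) (by simpa using hij)
      simpa using this
  · rintro ⟨h1, h2⟩
    rw [VShaped, inv_extB_zero]
    constructor
    · intro i j hij hj
      induction j using Fin.cases with
      | zero => exact absurd (lt_of_lt_of_le hij (Fin.zero_le _)) (lt_irrefl _)
      | succ j' =>
        induction i using Fin.cases with
        | zero =>
          rw [extB_zero, extB_succ]
          exact Fin.castSucc_lt_last _
        | succ i' =>
          rw [extB_succ, extB_succ, Fin.castSucc_lt_castSucc_iff]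
          exact h1 i' j' (by simpa using hij) (by simpa using hj)
    · intro i j hi hij
      induction i using Fin.cases with
      | zero => exact absurd (lt_of_lt_of_le (Fin.succ_pos _) hi) (by simp)
      | succ i' =>
        induction j using Fin.cases with
        | zero => exact absurd (lt_trans (Fin.succ_pos i') hij) (by simp)
        | succ j' =>
          rw [extB_succ, extB_succ, Fin.castSucc_lt_castSucc_iff]
          exact h2 i' j' (by simpa using hi) (by simpa using hij)

lemma vshaped_apply_zero {n : ℕ} {σ : Equiv.Perm (Fin (n + 2))}
    (h : VShaped σ) (hlast : σ (Fin.last (n + 1)) ≠ Fin.last (n + 1)) :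
    σ 0 = Fin.last (n + 1) := by
  set p := σ⁻¹ (Fin.last (n + 1)) with hp
  have hσp : σ p = Fin.last (n + 1) := perm_apply_inv_self _ _
  have hpne : p ≠ Fin.last (n + 1) := by
    intro hc; rw [hc] at hσp; exact hlast hσp
  suffices hp0 : p = 0 by rw [← hp0]; exact hσp
  by_contra hp0
  rcases le_total p (σ⁻¹ 0) with hle | hle
  · have := h.1 0 p (Fin.pos_of_ne_zero hp0) hle
    rw [hσp] at this
    exact absurd (lt_of_lt_of_le this (Fin.le_last _)) (lt_irrefl _)
  · have := h.2 p (Fin.last (n + 1)) hle (lt_of_le_of_ne (Fin.le_last _) hpne)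
    rw [hσp] at this
    exact absurd (lt_of_lt_of_le this (Fin.le_last _)) (lt_irrefl _)

/-- restriction of a permutation fixing the last point -/
def restrA {n : ℕ} (σ : Equiv.Perm (Fin (n + 2))) (h : σ (Fin.last (n + 1)) = Fin.last (n + 1)) :
    Equiv.Perm (Fin (n + 1)) where
  toFun i := (σ i.castSucc).castPred (fun hh =>
    absurd (σ.injective (hh.trans h.symm)) (Fin.castSucc_lt_last i).ne)
  invFun i := (σ⁻¹ i.castSucc).castPred (fun hh => by
    have : i.castSucc = Fin.last (n + 1) := by
      rw [← h, ← hh, perm_apply_inv_self]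
    exact absurd this (Fin.castSucc_lt_last i).ne)
  left_inv i := by
    apply Fin.castSucc_injective
    simp [Fin.castSucc_castPred]
  right_inv i := by
    apply Fin.castSucc_injective
    simp [Fin.castSucc_castPred]

lemma extA_restrA {n : ℕ} (σ : Equiv.Perm (Fin (n + 2)))
    (h : σ (Fin.last (n + 1)) = Fin.last (n + 1)) : extA (restrA σ h) = σ := by
  apply Equiv.ext; intro i
  induction i using Fin.lastCases with
  | last => rw [extA_last, h]
  | cast i' =>
    rw [extA_castSucc]
    exact Fin.castSucc_castPred _ (fun hh =>
      absurd (σ.injective (hh.trans h.symm)) (Fin.castSucc_lt_last i').ne)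

end VAux

/-- in any Lie algebra, for elements `f 0, …, f n` (written `f₁,…,f_n`
1-based) and any `x`,
`[ad_{f_n}⋯ad_{f_2}(f_1), x] = ∑_{σ ∈ I_n} (-1)^{σ⁻¹(1)-1} ad_{f_{σ(n)}}⋯ad_{f_{σ(1)}}(x)`,
where `I_n` is the set of V-shaped permutations. -/
theorem bracket_adChain_eq_sum_vshaped
    {R : Type*} {L : Type*} [CommRing R] [LieRing L] [LieAlgebra R L]
    {m : ℕ} (f : Fin (m + 1) → L) (x : L) :
    ⁅adChain (fun i : Fin m => f i.succ) (f 0), x⁆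
      = ∑ σ ∈ Finset.univ.filter (VShaped (n := m)),
          ((-1 : ℤ) ^ ((σ⁻¹ (0 : Fin (m + 1)) : Fin (m + 1)) : ℕ)) •
            adChain (fun i => f (σ i)) x := by
  induction m generalizing x with
  | zero =>
    have hf : (Finset.univ.filter (VShaped (n := 0))) = {1} := by decide
    rw [hf, Finset.sum_singleton]
    simp [adChain, List.finRange_succ, List.finRange_zero]
  | succ m ih =>
    set g : Fin (m + 1) → L := f ∘ Fin.castSucc with hg
    have hL : adChain (fun i : Fin (m + 1) => f i.succ) (f 0)
        = ⁅f (Fin.last (m + 1)), adChain (fun i : Fin m => g i.succ) (g 0)⁆ := by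
      rw [VAux.adChain_succ_last]
      rfl
    rw [hL, lie_lie]
    rw [← Finset.sum_filter_add_sum_filter_not
      (Finset.univ.filter (VShaped (n := m + 1)))
      (fun σ => σ (Fin.last (m + 1)) = Fin.last (m + 1))
      (fun σ => ((-1 : ℤ) ^ ((σ⁻¹ (0 : Fin (m + 2)) : Fin (m + 2)) : ℕ)) •
            adChain (fun i => f (σ i)) x)]
    have hA : ∑ σ ∈ (Finset.univ.filter (VShaped (n := m + 1))).filter
          (fun σ => σ (Fin.last (m + 1)) = Fin.last (m + 1)),
          ((-1 : ℤ) ^ ((σ⁻¹ (0 : Fin (m + 2)) : Fin (m + 2)) : ℕ)) •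
            adChain (fun i => f (σ i)) x
        = ⁅f (Fin.last (m + 1)), ⁅adChain (fun i : Fin m => g i.succ) (g 0), x⁆⁆ := by
      have hset : (Finset.univ.filter (VShaped (n := m + 1))).filter
          (fun σ => σ (Fin.last (m + 1)) = Fin.last (m + 1))
          = (Finset.univ.filter (VShaped (n := m))).image VAux.extA := by
        ext σ
        simp only [Finset.mem_filter, Finset.mem_image, Finset.mem_univ, true_and]
        constructor
        · rintro ⟨hV, hP⟩
          refine ⟨VAux.restrA σ hP, ?_, VAux.extA_restrA σ hP⟩
          rw [← VAux.vshaped_extA, VAux.extA_restrA]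
          exact hV
        · rintro ⟨τ, hτ, rfl⟩
          exact ⟨(VAux.vshaped_extA τ).2 hτ, VAux.extA_last τ⟩
      rw [hset, Finset.sum_image (fun τ _ τ' _ h => VAux.extA_injective h),
        ih g x, VAux.lie_finset_sum]
      apply Finset.sum_congr rfl
      intro τ hτ
      rw [VAux.inv_extA_zero, Fin.coe_castSucc, lie_zsmul]
      congr 1
      rw [VAux.adChain_succ_last]
      congr 1
      · exact congrArg f (VAux.extA_last τ)
      · congr 1
        funext i
        show f (VAux.extA τ (Fin.castSucc i)) = g (τ i)
        rw [VAux.extA_castSucc, hg]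
        rfl
    have hB : ∑ σ ∈ (Finset.univ.filter (VShaped (n := m + 1))).filter
          (fun σ => ¬ σ (Fin.last (m + 1)) = Fin.last (m + 1)),
          ((-1 : ℤ) ^ ((σ⁻¹ (0 : Fin (m + 2)) : Fin (m + 2)) : ℕ)) •
            adChain (fun i => f (σ i)) x
        = -⁅adChain (fun i : Fin m => g i.succ) (g 0), ⁅f (Fin.last (m + 1)), x⁆⁆ := by
      have hset : (Finset.univ.filter (VShaped (n := m + 1))).filter
          (fun σ => ¬ σ (Fin.last (m + 1)) = Fin.last (m + 1))
          = (Finset.univ.filter (VShaped (n := m))).image VAux.extB := by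
        ext σ
        simp only [Finset.mem_filter, Finset.mem_image, Finset.mem_univ, true_and]
        constructor
        · rintro ⟨hV, hP⟩
          have h0 : σ 0 = Fin.last (m + 1) := VAux.vshaped_apply_zero hV hP
          have hPr : (σ * finRotate (m + 2)) (Fin.last (m + 1)) = Fin.last (m + 1) := by
            rw [Equiv.Perm.mul_apply, finRotate_last, h0]
          have hEB : VAux.extB (VAux.restrA _ hPr) = σ := by
            rw [VAux.extB, VAux.extA_restrA, mul_inv_cancel_right]
          refine ⟨VAux.restrA _ hPr, ?_, hEB⟩
          rw [← VAux.vshaped_extB, hEB]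
          exact hV
        · rintro ⟨τ, hτ, rfl⟩
          refine ⟨(VAux.vshaped_extB τ).2 hτ, ?_⟩
          have : VAux.extB τ (Fin.last (m + 1)) = Fin.castSucc (τ (Fin.last m)) := by
            rw [← Fin.succ_last, VAux.extB_succ]
          rw [this]
          exact (Fin.castSucc_lt_last _).ne
      rw [hset, Finset.sum_image (fun τ _ τ' _ h => VAux.extB_injective h),
        ih g ⁅f (Fin.last (m + 1)), x⁆, ← Finset.sum_neg_distrib]
      apply Finset.sum_congr rfl
      intro τ hτ
      rw [VAux.inv_extB_zero, Fin.val_succ, pow_succ, mul_neg_one, neg_smul]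
      congr 1
      rw [VAux.adChain_succ_zero, VAux.extB_zero]
      exact congrArg (fun a : L => ((-1 : ℤ) ^ ((τ⁻¹ (0 : Fin (m + 1)) : Fin (m + 1)) : ℕ)) • a)
        (congrArg (fun h : Fin (m + 1) → L => adChain h ⁅f (Fin.last (m + 1)), x⁆)
          (funext fun i => by
            show f (VAux.extB τ i.succ) = g (τ i)
            rw [VAux.extB_succ, hg]
            rfl))
    rw [hA, hB]
    exact sub_eq_add_neg _ _
end

section
/- For $\theta \in \mathbb{k}$, in the rational-function operad $\mathcal{RF}^\theta$ whose composition substitutes $F^\theta(x,y) = x+y+\theta x y$, the operations $\mu = 1 \in \mathcal{RF}^\theta(2)$ and $R = \frac{1}{x_1} \in \mathcal{RF}^\theta(1)$ satisfy the weight-$\theta$ Rota--Baxter identity. Concretely, $\frac{1}{x_1}\cdot\frac{1}{x_2} = \frac{1}{x_1+x_2+\theta x_1 x_2}\left(\frac{1}{x_1} + \frac{1}{x_2} + \theta\right)$ in $\mathbb{k}(x_1,x_2)$. -/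
open MvPolynomial

lemma rf_aux {k : Type*} [Field k] [CharZero k] (θ : k) :
    (X 0 + X 1 + C θ * X 0 * X 1 : MvPolynomial (Fin 2) k) ≠ 0 := by
  intro h
  have := congrArg (MvPolynomial.eval (fun i : Fin 2 => if i = 0 then (1 : k) else 0)) h
  simp at this
set_option synthInstance.maxHeartbeats 800000 in
/-- in the rational-function operad `RF^θ` built on the formal group law
`F^θ(x,y) = x + y + θxy`, the operations `μ = 1` and `R = 1/x₁` satisfy the weight-`θ`
Rota–Baxter identity; concretely, in `k(x₁,x₂)`,
`(1/x₁)(1/x₂) = (1/(x₁+x₂+θx₁x₂))·(1/x₁ + 1/x₂ + θ)`. -/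
theorem rf_theta_rotaBaxter (k : Type*) [Field k] [CharZero k] (θ : k) :
    let K := FractionRing (MvPolynomial (Fin 2) k)
    let x : Fin 2 → K := fun i => algebraMap (MvPolynomial (Fin 2) k) K (X i)
    let t : K := algebraMap (MvPolynomial (Fin 2) k) K (C θ)
    (x 0)⁻¹ * (x 1)⁻¹
      = (x 0 + x 1 + t * x 0 * x 1)⁻¹ * ((x 0)⁻¹ + (x 1)⁻¹ + t) := by
  intro K x t
  have hinj : Function.Injective (algebraMap (MvPolynomial (Fin 2) k) K) :=
    IsFractionRing.injective _ _
  have hx0 : x 0 ≠ 0 := by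
    simpa [x, map_eq_zero_iff _ hinj] using (X_ne_zero (R := k) (0 : Fin 2))
  have hx1 : x 1 ≠ 0 := by
    simpa [x, map_eq_zero_iff _ hinj] using (X_ne_zero (R := k) (1 : Fin 2))
  have hsum : x 0 + x 1 + t * x 0 * x 1 ≠ 0 := by
    have : x 0 + x 1 + t * x 0 * x 1
        = algebraMap (MvPolynomial (Fin 2) k) K (X 0 + X 1 + C θ * X 0 * X 1) := by
      simp [x, t]
    rw [this]
    intro h
    exact rf_aux θ (hinj (h.trans (map_zero _).symm))
  rw [eq_comm, inv_mul_eq_iff_eq_mul₀ hsum]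
  linear_combination (-(x 1)⁻¹ - t) * mul_inv_cancel₀ hx0 + (-(x 0)⁻¹ - t * x 0 * (x 0)⁻¹) * mul_inv_cancel₀ hx1
end

section
/- In a dendriform algebra with an adjoined unit-like element $d$ satisfying $d \prec u = 0$ and $u \succ d = 0$ for all elements $u$, suppose elements $\alpha$ and $\beta$ of the completed algebra satisfy $\beta \prec (d+\alpha) = \alpha + (d+\alpha) \succ \beta$. Then, writing $\beta^{\prec 1} = \beta$, $\beta^{\prec(k+1)} = \beta \prec \beta^{\prec k}$, and $uv = u \prec v + u \succ v$ for the total product, one has $\left(1 + \sum_{k\ge 1}\beta^{\prec k}\right) d = (d+\alpha)\left(1 + \sum_{k\ge 1}\beta^{\prec k}\right)$. -/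
/-- Weight components of the iterated left powers `β^{≺(k+1)}` of the series
`β = ∑_{i≥1} b i`: `precPow prec b k n` is the weight-`n` component of `β^{≺(k+1)}`. -/
def precPow {A : Type*} [AddCommMonoid A] (prec : A → A → A) (b : ℕ → A) :
    ℕ → ℕ → A
  | 0, n => b n
  | k + 1, n => ∑ i ∈ Finset.range (n + 1), prec (b i) (precPow prec b k (n - i))

section DendAux
variable {A : Type*} [AddCommGroup A]

/-- Package a biadditive map as a bundled bilinear `AddMonoidHom`. -/
def mk2 (f : A → A → A)
    (hl : ∀ x y z : A, f (x + y) z = f x z + f y z)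
    (hr : ∀ x y z : A, f x (y + z) = f x y + f x z) : A →+ A →+ A :=
  AddMonoidHom.mk' (fun x => AddMonoidHom.mk' (f x) (hr x))
    (fun x y => AddMonoidHom.ext fun z => hl x y z)

@[simp] lemma mk2_apply (f : A → A → A) (hl) (hr) (x y : A) :
    mk2 f hl hr x y = f x y := rfl

/-- Convolution product of weight-graded series with respect to a bilinear map. -/
def cv (f : A →+ A →+ A) (u v : ℕ → A) : ℕ → A :=
  fun n => ∑ i ∈ Finset.range (n + 1), f (u i) (v (n - i))

lemma cv_apply (f : A →+ A →+ A) (u v : ℕ → A) (n : ℕ) :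
    cv f u v n = ∑ i ∈ Finset.range (n + 1), f (u i) (v (n - i)) := rfl

lemma cv_add_left (f : A →+ A →+ A) (u v w : ℕ → A) :
    cv f (u + v) w = cv f u w + cv f v w := by
  funext n; simp [cv, Finset.sum_add_distrib]

lemma cv_add_right (f : A →+ A →+ A) (u v w : ℕ → A) :
    cv f u (v + w) = cv f u v + cv f u w := by
  funext n; simp [cv, Finset.sum_add_distrib]

lemma cv_sub_left (f : A →+ A →+ A) (u v w : ℕ → A) :
    cv f (u - v) w = cv f u w - cv f v w := by
  funext n; simp [cv, Finset.sum_sub_distrib]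

lemma cv_sub_right (f : A →+ A →+ A) (u v w : ℕ → A) :
    cv f u (v - w) = cv f u v - cv f u w := by
  funext n; simp [cv, Finset.sum_sub_distrib]

lemma cv_hom_add (f g : A →+ A →+ A) (u v : ℕ → A) :
    cv (f + g) u v = cv f u v + cv g u v := by
  funext n; simp [cv, Finset.sum_add_distrib]

lemma sum_triangle (n : ℕ) (F : ℕ → ℕ → ℕ → A) :
    ∑ j ∈ Finset.range (n + 1), ∑ i ∈ Finset.range (j + 1), F i (j - i) (n - j)
      = ∑ i ∈ Finset.range (n + 1), ∑ m ∈ Finset.range (n - i + 1), F i m (n - i - m) := by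
  rw [Finset.sum_sigma', Finset.sum_sigma']
  refine Finset.sum_nbij' (fun p => ⟨p.2, p.1 - p.2⟩) (fun p => ⟨p.1 + p.2, p.1⟩)
    ?_ ?_ ?_ ?_ ?_
  · rintro ⟨j, i⟩ h
    simp only [Finset.mem_sigma, Finset.mem_range] at h ⊢
    omega
  · rintro ⟨i, m⟩ h
    simp only [Finset.mem_sigma, Finset.mem_range] at h ⊢
    omega
  · rintro ⟨j, i⟩ h
    simp only [Finset.mem_sigma, Finset.mem_range] at h
    simp only [Sigma.mk.inj_iff]
    constructor
    · omega
    · exact heq_of_eq rfl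
  · rintro ⟨i, m⟩ h
    simp only [Finset.mem_sigma, Finset.mem_range] at h
    simp only [Sigma.mk.inj_iff]
    constructor
    · trivial
    · exact heq_of_eq (by omega)
  · rintro ⟨j, i⟩ h
    simp only [Finset.mem_sigma, Finset.mem_range] at h
    have : n - j = n - i - (j - i) := by omega
    rw [this]

lemma cv_assoc (f g h k : A →+ A →+ A)
    (hid : ∀ x y z : A, f (g x y) z = h x (k y z)) (u v w : ℕ → A) :
    cv f (cv g u v) w = cv h u (cv k v w) := by
  funext n
  calc cv f (cv g u v) w n
      = ∑ j ∈ Finset.range (n + 1), ∑ i ∈ Finset.range (j + 1),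
          f (g (u i) (v (j - i))) (w (n - j)) := by
        simp only [cv_apply]
        refine Finset.sum_congr rfl fun j _ => ?_
        rw [map_sum]
        exact AddMonoidHom.finset_sum_apply _ _ _
    _ = ∑ j ∈ Finset.range (n + 1), ∑ i ∈ Finset.range (j + 1),
          h (u i) (k (v (j - i)) (w (n - j))) :=
        Finset.sum_congr rfl fun j _ => Finset.sum_congr rfl fun i _ => hid _ _ _
    _ = ∑ i ∈ Finset.range (n + 1), ∑ m ∈ Finset.range (n - i + 1),
          h (u i) (k (v m) (w (n - i - m))) :=
        sum_triangle n (fun i m p => h (u i) (k (v m) (w p)))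
    _ = cv h u (cv k v w) n := by
        simp only [cv_apply, map_sum]

lemma precPow_vanish (prec : A → A → A) (b : ℕ → A) (hb0 : b 0 = 0)
    (h0l : ∀ z : A, prec 0 z = 0) (h0r : ∀ x : A, prec x 0 = 0) :
    ∀ k m : ℕ, m ≤ k → precPow prec b k m = 0 := by
  intro k
  induction k with
  | zero => intro m hm; interval_cases m; exact hb0
  | succ k ih =>
    intro m hm
    show (∑ i ∈ Finset.range (m + 1), prec (b i) (precPow prec b k (m - i))) = 0
    refine Finset.sum_eq_zero fun i hi => ?_
    rcases Nat.eq_zero_or_pos i with h | h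
    · subst h; rw [hb0, h0l]
    · rw [ih (m - i) (by omega), h0r]

lemma cv_D_right (f : A →+ A →+ A) (d : A) (u : ℕ → A) (n : ℕ) :
    cv f u (fun m => if m = 0 then d else 0) n = f (u n) d := by
  rw [cv_apply]
  rw [Finset.sum_eq_single n]
  · simp
  · intro i hi hne
    simp only [Finset.mem_range] at hi
    rw [if_neg (by omega)]
    simp
  · intro h
    exact absurd (Finset.self_mem_range_succ n) h

lemma cv_D_left (f : A →+ A →+ A) (d : A) (u : ℕ → A) (n : ℕ) :
    cv f (fun m => if m = 0 then d else 0) u n = f d (u n) := by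
  rw [cv_apply]
  rw [Finset.sum_eq_single 0]
  · simp
  · intro i hi hne
    rw [if_neg hne]
    simp
  · intro h
    exact absurd (Finset.mem_range.2 (by omega)) h

lemma sum_f_ppow_ext (f : A →+ A →+ A) (prec : A → A → A) (b : ℕ → A)
    (hb0 : b 0 = 0) (h0l : ∀ z : A, prec 0 z = 0) (h0r : ∀ x : A, prec x 0 = 0)
    (x : A) {n m : ℕ} (hmn : m ≤ n) :
    ∑ k ∈ Finset.range m, f x (precPow prec b k m)
      = ∑ k ∈ Finset.range n, f x (precPow prec b k m) :=
  Finset.sum_subset (Finset.range_subset_range.2 hmn) (fun k _ hk => by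
    rw [precPow_vanish prec b hb0 h0l h0r k m (by simpa using hk), map_zero])

end DendAux

section MainAux
variable {A : Type*} [AddCommGroup A]

theorem dend_aux (prec : A → A → A) (P Q : A →+ A →+ A)
    (hP : ∀ x y : A, P x y = prec x y)
    (hd1 : ∀ x y z : A, P (P x y) z = P x (P y z + Q y z))
    (hd2 : ∀ x y z : A, P (Q x y) z = Q x (P y z))
    (d : A) (a b : ℕ → A) (ha0 : a 0 = 0) (hb0 : b 0 = 0)
    (hdP : ∀ u : A, P d u = 0) (hdQ : ∀ u : A, Q u d = 0)
    (hβ' : ∀ n : ℕ, 1 ≤ n →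
      P (b n) d + ∑ i ∈ Finset.range (n + 1), P (b i) (a (n - i))
        = a n + Q d (b n) + ∑ i ∈ Finset.range (n + 1), Q (a i) (b (n - i))) :
    cv P (fun n => ∑ k ∈ Finset.range n, precPow prec b k n)
        (fun m => if m = 0 then d else 0)
      = a + cv P ((fun m => if m = 0 then d else 0) + a)
              (fun n => ∑ k ∈ Finset.range n, precPow prec b k n)
          + cv Q ((fun m => if m = 0 then d else 0) + a)
              (fun n => ∑ k ∈ Finset.range n, precPow prec b k n) := by
  set D : ℕ → A := fun m => if m = 0 then d else 0 with hD
  set B : ℕ → A := fun n => ∑ k ∈ Finset.range n, precPow prec b k n with hB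
  have h0l : ∀ z : A, prec 0 z = 0 := fun z => by rw [← hP]; simp
  have h0r : ∀ x : A, prec x 0 = 0 := fun x => by rw [← hP]; simp
  have hvan := precPow_vanish prec b hb0 h0l h0r
  -- P d · = 0 kills cv P D u ; Q · d = 0 kills cv Q u D
  have hPD : ∀ u : ℕ → A, cv P D u = 0 := by
    intro u; funext n
    rw [show (0 : ℕ → A) n = 0 from rfl, cv_D_left]
    exact hdP _
  have hQD : ∀ u : ℕ → A, cv Q u D = 0 := by
    intro u; funext n
    rw [show (0 : ℕ → A) n = 0 from rfl, cv_D_right]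
    exact hdQ _
  -- the fixed point equation B = b + b ≺ B
  have hfix : B = b + cv P b B := by
    funext n
    show (∑ k ∈ Finset.range n, precPow prec b k n) = b n + cv P b B n
    rw [cv_apply]
    rcases Nat.eq_zero_or_pos n with hn | hn
    · subst hn
      simp [hB, hb0]
    · obtain ⟨m, rfl⟩ : ∃ m, n = m + 1 := ⟨n - 1, by omega⟩
      rw [Finset.sum_range_succ']
      have hstep : ∀ k, precPow prec b (k + 1) (m + 1)
          = ∑ i ∈ Finset.range (m + 2), P (b i) (precPow prec b k (m + 1 - i)) := by
        intro k
        show (∑ i ∈ Finset.range (m + 1 + 1), prec (b i) (precPow prec b k (m + 1 - i))) = _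
        exact Finset.sum_congr rfl fun i _ => (hP _ _).symm
      calc (∑ k ∈ Finset.range m, precPow prec b (k + 1) (m + 1)) + precPow prec b 0 (m + 1)
          = b (m + 1) + ∑ k ∈ Finset.range m, ∑ i ∈ Finset.range (m + 2),
              P (b i) (precPow prec b k (m + 1 - i)) := by
            rw [add_comm]
            exact congrArg _ (Finset.sum_congr rfl fun k _ => hstep k)
        _ = b (m + 1) + ∑ i ∈ Finset.range (m + 2), ∑ k ∈ Finset.range m,
              P (b i) (precPow prec b k (m + 1 - i)) := by rw [Finset.sum_comm]
        _ = b (m + 1) + ∑ i ∈ Finset.range (m + 2), P (b i) (B (m + 1 - i)) := by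
            refine congrArg _ (Finset.sum_congr rfl fun i hi => ?_)
            rcases Nat.eq_zero_or_pos i with h | h
            · subst h
              rw [hb0]
              simp
            · have hle : m + 1 - i ≤ m := by
                simp only [Finset.mem_range] at hi; omega
              rw [hB]
              rw [map_sum]
              exact (sum_f_ppow_ext P prec b hb0 h0l h0r (b i) hle).symm
  -- the hypothesis as a series identity: b ≺ (D + a) = a + (D + a) ≻ b
  have hH : cv P b (D + a) = a + cv Q (D + a) b := by
    funext n
    rw [cv_add_right, cv_add_left]
    show cv P b D n + cv P b a n = a n + (cv Q D b n + cv Q a b n)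
    rw [cv_D_right, cv_D_left, cv_apply, cv_apply]
    rcases Nat.eq_zero_or_pos n with hn | hn
    · subst hn
      simp [hb0, ha0]
    · have := hβ' n hn
      rw [← add_assoc]
      exact this
  -- lifted dendriform identities
  have hd1' : ∀ u v w : ℕ → A, cv P (cv P u v) w = cv P u (cv P v w + cv Q v w) := by
    intro u v w
    have h := cv_assoc P P P (P + Q)
      (fun x y z => by simpa [AddMonoidHom.add_apply] using hd1 x y z) u v w
    rwa [cv_hom_add] at h
  have hd2' : ∀ u v w : ℕ → A, cv P (cv Q u v) w = cv Q u (cv P v w) :=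
    fun u v w => cv_assoc P Q Q P hd2 u v w
  -- main derivation
  have h4 : cv P B (D + a) = cv P B D + cv P B a := cv_add_right P B D a
  have h5 : cv Q B (D + a) = cv Q B a := by
    rw [cv_add_right, hQD, zero_add]
  have h3 : cv P B (D + a)
      = a + cv Q (D + a) b + cv P b (cv P B (D + a) + cv Q B (D + a)) := by
    conv_lhs => rw [hfix]
    rw [cv_add_left, hH, hd1']
  have h3' : cv P B D + cv P B a
      = a + cv Q (D + a) b + cv P b (cv P B D + cv P B a + cv Q B a) := by
    have h := h3
    rw [h4, h5] at h
    exact h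
  have p1 : cv P (D + a) B = cv P a B := by
    rw [cv_add_left, hPD, zero_add]
  have p2 : cv Q (D + a) B = cv Q (D + a) b + cv P (cv Q (D + a) b) B := by
    conv_lhs => rw [hfix]
    rw [cv_add_right, ← hd2']
  have p3 : cv P (cv Q (D + a) b) B
      = cv P b (cv P (D + a) B + cv Q (D + a) B) - cv P a B := by
    have hQb : cv Q (D + a) b = cv P b (D + a) - a := by rw [hH]; abel
    rw [hQb, cv_sub_left, hd1']
  have p4 : cv P B a = cv P b a + cv P b (cv P B a + cv Q B a) := by
    conv_lhs => rw [hfix]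
    rw [cv_add_left, hd1']
  have q1 : cv P (D + a) B + cv Q (D + a) B
      = cv Q (D + a) b + cv P b (cv P (D + a) B + cv Q (D + a) B) := by
    calc cv P (D + a) B + cv Q (D + a) B
        = cv P a B + (cv Q (D + a) b + cv P (cv Q (D + a) b) B) := by
          rw [p2, p1]
      _ = cv P a B + (cv Q (D + a) b
            + (cv P b (cv P (D + a) B + cv Q (D + a) B) - cv P a B)) := by rw [p3]
      _ = cv Q (D + a) b + cv P b (cv P (D + a) B + cv Q (D + a) B) := by abel
  have hF : (a + cv P (D + a) B + cv Q (D + a) B) + cv P B a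
      = a + cv Q (D + a) b
        + cv P b ((a + cv P (D + a) B + cv Q (D + a) B) + cv P B a + cv Q B a) := by
    have merge : ∀ X Y : ℕ → A, cv P b X + cv P b Y = cv P b (X + Y) :=
      fun X Y => (cv_add_right P b X Y).symm
    calc (a + cv P (D + a) B + cv Q (D + a) B) + cv P B a
        = a + (cv P (D + a) B + cv Q (D + a) B) + cv P B a := by abel
      _ = a + (cv Q (D + a) b + cv P b (cv P (D + a) B + cv Q (D + a) B))
            + (cv P b a + cv P b (cv P B a + cv Q B a)) := by rw [← q1, ← p4]
      _ = a + cv Q (D + a) b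
            + (cv P b (cv P (D + a) B + cv Q (D + a) B) + cv P b a
              + cv P b (cv P B a + cv Q B a)) := by abel
      _ = a + cv Q (D + a) b
            + cv P b (cv P (D + a) B + cv Q (D + a) B + a + (cv P B a + cv Q B a)) := by
          rw [merge, merge]
      _ = a + cv Q (D + a) b
            + cv P b ((a + cv P (D + a) B + cv Q (D + a) B) + cv P B a + cv Q B a) := by
          congr 1
          congr 1
          abel
  have hX : cv P B D - (a + cv P (D + a) B + cv Q (D + a) B)
      = cv P b (cv P B D - (a + cv P (D + a) B + cv Q (D + a) B)) := by
    calc cv P B D - (a + cv P (D + a) B + cv Q (D + a) B)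
        = (cv P B D + cv P B a)
          - ((a + cv P (D + a) B + cv Q (D + a) B) + cv P B a) := by abel
      _ = (a + cv Q (D + a) b + cv P b (cv P B D + cv P B a + cv Q B a))
          - (a + cv Q (D + a) b
            + cv P b ((a + cv P (D + a) B + cv Q (D + a) B) + cv P B a + cv Q B a)) := by
          rw [← h3', ← hF]
      _ = cv P b (cv P B D + cv P B a + cv Q B a)
          - cv P b ((a + cv P (D + a) B + cv Q (D + a) B) + cv P B a + cv Q B a) := by
          abel
      _ = cv P b ((cv P B D + cv P B a + cv Q B a)
          - ((a + cv P (D + a) B + cv Q (D + a) B) + cv P B a + cv Q B a)) :=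
          (cv_sub_right P b _ _).symm
      _ = cv P b (cv P B D - (a + cv P (D + a) B + cv Q (D + a) B)) := by
          congr 1
          abel
  have hzero : ∀ n, (cv P B D - (a + cv P (D + a) B + cv Q (D + a) B)) n = 0 := by
    intro n
    induction n using Nat.strong_induction_on with
    | _ n ih =>
      have hn := congrFun hX n
      rw [hn, cv_apply]
      refine Finset.sum_eq_zero fun i hi => ?_
      rcases Nat.eq_zero_or_pos i with h | h
      · subst h; rw [hb0]; simp
      · have hlt : n - i < n := by
          simp only [Finset.mem_range] at hi; omega
        rw [ih (n - i) hlt, map_zero]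
  funext n
  have h := hzero n
  rw [Pi.sub_apply] at h
  exact sub_eq_zero.mp h

end MainAux

/-- in a (weight-graded, componentwise complete) dendriform algebra
with an adjoined element `d` satisfying `d ≺ u = 0` and `u ≻ d = 0`, if the series
`α = ∑ a i` and `β = ∑ b i` satisfy `β ≺ (d+α) = α + (d+α) ≻ β`, then
`(1 + ∑_k β^{≺k}) d = (d+α)(1 + ∑_k β^{≺k})`, where `uv = u ≺ v + u ≻ v`.
All series identities are stated componentwise in the weight grading. -/
theorem dendriform_gauge_identity
    {A : Type*} [AddCommGroup A]
    (prec succ : A → A → A)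
    (prec_add_left : ∀ x y z : A, prec (x + y) z = prec x z + prec y z)
    (prec_add_right : ∀ x y z : A, prec x (y + z) = prec x y + prec x z)
    (succ_add_left : ∀ x y z : A, succ (x + y) z = succ x z + succ y z)
    (succ_add_right : ∀ x y z : A, succ x (y + z) = succ x y + succ x z)
    (dend₁ : ∀ x y z : A, prec (prec x y) z = prec x (prec y z + succ y z))
    (dend₂ : ∀ x y z : A, prec (succ x y) z = succ x (prec y z))
    (dend₃ : ∀ x y z : A, succ (prec x y + succ x y) z = succ x (succ y z))
    (d : A) (a b : ℕ → A) (ha0 : a 0 = 0) (hb0 : b 0 = 0)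
    (hd_prec : ∀ u : A, prec d u = 0)
    (hd_succ : ∀ u : A, succ u d = 0)
    (hβ : ∀ n : ℕ, 1 ≤ n →
      prec (b n) d + ∑ i ∈ Finset.range (n + 1), prec (b i) (a (n - i))
        = a n + succ d (b n)
          + ∑ i ∈ Finset.range (n + 1), succ (a i) (b (n - i))) :
    ∀ n : ℕ, 1 ≤ n →
      ∑ k ∈ Finset.range n,
          (prec (precPow prec b k n) d + succ (precPow prec b k n) d)
        = a n + ∑ k ∈ Finset.range n,
            ((prec d (precPow prec b k n) + succ d (precPow prec b k n))
              + ∑ i ∈ Finset.range (n + 1),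
                  (prec (a i) (precPow prec b k (n - i))
                    + succ (a i) (precPow prec b k (n - i)))) := by
  intro n hn
  set P : A →+ A →+ A := mk2 prec prec_add_left prec_add_right with hPdef
  set Q : A →+ A →+ A := mk2 succ succ_add_left succ_add_right with hQdef
  have hPapp : ∀ x y : A, P x y = prec x y := fun _ _ => rfl
  have hQapp : ∀ x y : A, Q x y = succ x y := fun _ _ => rfl
  have h0l : ∀ z : A, prec 0 z = 0 := fun z => by rw [← hPapp]; simp
  have h0r : ∀ x : A, prec x 0 = 0 := fun x => by rw [← hPapp]; simp
  set B : ℕ → A := fun m => ∑ k ∈ Finset.range m, precPow prec b k m with hBdef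
  have key : cv P B (fun m => if m = 0 then d else 0)
      = a + cv P ((fun m => if m = 0 then d else 0) + a) B
          + cv Q ((fun m => if m = 0 then d else 0) + a) B :=
    dend_aux prec P Q hPapp
      (fun x y z => by simp only [hPapp, hQapp]; exact dend₁ x y z)
      (fun x y z => by simp only [hPapp, hQapp]; exact dend₂ x y z)
      d a b ha0 hb0
      (fun u => by rw [hPapp]; exact hd_prec u)
      (fun u => by rw [hQapp]; exact hd_succ u)
      (fun m hm => by simp only [hPapp, hQapp]; exact hβ m hm)
  have hEq := congrFun key n
  rw [Pi.add_apply, Pi.add_apply, cv_D_right, cv_add_left, cv_add_left,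
    Pi.add_apply, Pi.add_apply, cv_D_left, cv_D_left, cv_apply, cv_apply] at hEq
  simp only [hPapp, hQapp, hd_prec, zero_add] at hEq
  -- hEq : prec (B n) d
  --   = a n + ∑ i, prec (a i) (B (n-i)) + (succ d (B n) + ∑ i, succ (a i) (B (n-i)))
  have hL : (∑ k ∈ Finset.range n,
      (prec (precPow prec b k n) d + succ (precPow prec b k n) d))
      = prec (B n) d := by
    rw [Finset.sum_congr rfl fun k _ => by rw [hd_succ (precPow prec b k n), add_zero]]
    have hms := map_sum (P.flip d) (fun k => precPow prec b k n) (Finset.range n)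
    simp only [AddMonoidHom.flip_apply, hPapp] at hms
    exact hms.symm
  have hsd : (∑ k ∈ Finset.range n, succ d (precPow prec b k n)) = succ d (B n) := by
    have hms := map_sum (Q d) (fun k => precPow prec b k n) (Finset.range n)
    simp only [hQapp] at hms
    exact hms.symm
  have htiP : ∀ i, (∑ k ∈ Finset.range n, prec (a i) (precPow prec b k (n - i)))
      = prec (a i) (B (n - i)) := by
    intro i
    have hext := sum_f_ppow_ext P prec b hb0 h0l h0r (a i) (Nat.sub_le n i)
    simp only [hPapp] at hext
    rw [← hext]
    have hms := map_sum (P (a i)) (fun k => precPow prec b k (n - i))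
      (Finset.range (n - i))
    simp only [hPapp] at hms
    exact hms.symm
  have htiQ : ∀ i, (∑ k ∈ Finset.range n, succ (a i) (precPow prec b k (n - i)))
      = succ (a i) (B (n - i)) := by
    intro i
    have hext := sum_f_ppow_ext Q prec b hb0 h0l h0r (a i) (Nat.sub_le n i)
    simp only [hQapp] at hext
    rw [← hext]
    have hms := map_sum (Q (a i)) (fun k => precPow prec b k (n - i))
      (Finset.range (n - i))
    simp only [hQapp] at hms
    exact hms.symm
  have hR : (a n + ∑ k ∈ Finset.range n,
      ((prec d (precPow prec b k n) + succ d (precPow prec b k n))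
        + ∑ i ∈ Finset.range (n + 1),
            (prec (a i) (precPow prec b k (n - i))
              + succ (a i) (precPow prec b k (n - i)))))
      = a n + (∑ i ∈ Finset.range (n + 1), prec (a i) (B (n - i)))
          + (succ d (B n) + ∑ i ∈ Finset.range (n + 1), succ (a i) (B (n - i))) := by
    simp only [hd_prec, zero_add]
    rw [Finset.sum_add_distrib, hsd]
    rw [Finset.sum_congr rfl fun k _ => Finset.sum_add_distrib]
    rw [Finset.sum_add_distrib]
    rw [Finset.sum_comm (f := fun k i => prec (a i) (precPow prec b k (n - i)))]
    rw [Finset.sum_comm (f := fun k i => succ (a i) (precPow prec b k (n - i)))]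
    rw [Finset.sum_congr rfl fun i _ => htiP i]
    rw [Finset.sum_congr rfl fun i _ => htiQ i]
    abel
  rw [hL, hR]
  exact hEq
end

section
/- In the field of rational functions $\mathbb{Q}(x_1, \ldots, x_n)$, the functions $\left\{ \prod_{j=1}^{n-1} \frac{1}{x_{\rho(1)} + \cdots + x_{\rho(j)}} : \rho \in S_n \right\}$ are linearly independent over $\mathbb{Q}$ (in fact they form a basis of the image of the arity-$n$ component of the Zinbiel operad inside the rational-function operad). -/
open MvPolynomial

/-- The rational function `∏_{j=1}^{n-1} 1/(x_{ρ(1)} + ⋯ + x_{ρ(j)})` associated to a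
permutation `ρ ∈ S_n`, in the field of rational functions `ℚ(x₁,…,xₙ)`. -/
noncomputable def zinbielBasisElt (n : ℕ) (ρ : Equiv.Perm (Fin n)) :
    FractionRing (MvPolynomial (Fin n) ℚ) :=
  ∏ j ∈ Finset.range (n - 1),
    (∑ t ∈ Finset.univ.filter (fun t : Fin n => (t : ℕ) ≤ j),
      algebraMap (MvPolynomial (Fin n) ℚ) (FractionRing (MvPolynomial (Fin n) ℚ))
        (X (ρ t)))⁻¹

namespace ZinbielAux

open Finset

variable (n : ℕ)

/-- The index set `{t : Fin n | t ≤ j}`. -/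
def F (j : ℕ) : Finset (Fin n) := Finset.univ.filter (fun t : Fin n => (t : ℕ) ≤ j)

lemma card_F {j : ℕ} (hj : j < n) : (F n j).card = j + 1 := by
  have h1 : j + 1 ≤ n := hj
  have : F n j = Finset.map (Fin.castLEEmb h1) Finset.univ := by
    ext t
    simp only [F, mem_filter, mem_univ, true_and, Finset.mem_map, Fin.castLEEmb,
      Function.Embedding.coeFn_mk]
    constructor
    · intro ht
      refine ⟨⟨(t : ℕ), by omega⟩, ?_⟩
      ext
      simp
    · rintro ⟨s, -, rfl⟩
      simpa using Nat.lt_succ_iff.mp s.isLt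
  rw [this, Finset.card_map, Finset.card_univ, Fintype.card_fin]

lemma F_nonempty (hn : 0 < n) (j : ℕ) : (F n j).Nonempty :=
  ⟨⟨0, hn⟩, by simp [F]⟩

/-- The linear form `x_{ρ(1)} + ⋯ + x_{ρ(j+1)}` as a polynomial. -/
noncomputable def LL (ρ : Equiv.Perm (Fin n)) (j : ℕ) : MvPolynomial (Fin n) ℚ :=
  ∑ t ∈ F n j, X (ρ t)

lemma LL_ne_zero (hn : 0 < n) (ρ : Equiv.Perm (Fin n)) (j : ℕ) : LL n ρ j ≠ 0 := by
  intro h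
  have h2 := congrArg (MvPolynomial.eval (fun _ => (1 : ℚ))) h
  rw [LL, map_sum] at h2
  simp only [eval_X, Finset.sum_const, nsmul_eq_mul, mul_one, map_zero] at h2
  have h3 := Finset.card_pos.mpr (F_nonempty n hn j)
  have h4 : ((F n j).card : ℚ) ≠ 0 := Nat.cast_ne_zero.mpr h3.ne'
  exact h4 h2

/-- The denominator polynomial of `zinbielBasisElt n ρ`. -/
noncomputable def dd (ρ : Equiv.Perm (Fin n)) : MvPolynomial (Fin n) ℚ :=
  ∏ j ∈ Finset.range (n - 1), LL n ρ j

lemma dd_ne_zero (ρ : Equiv.Perm (Fin n)) : dd n ρ ≠ 0 := by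
  rw [dd, Finset.prod_ne_zero_iff]
  intro j hj
  have : 0 < n := by have := Finset.mem_range.mp hj; omega
  exact LL_ne_zero n this ρ j

lemma zinbiel_eq (ρ : Equiv.Perm (Fin n)) :
    zinbielBasisElt n ρ =
      (algebraMap (MvPolynomial (Fin n) ℚ) (FractionRing (MvPolynomial (Fin n) ℚ))
        (dd n ρ))⁻¹ := by
  rw [dd, map_prod, ← Finset.prod_inv_distrib, zinbielBasisElt]
  refine Finset.prod_congr rfl fun j _ => ?_
  rw [LL, map_sum]
  rfl

section TrailingDeg

open Polynomial

lemma ntd_prod {ι : Type*} (s : Finset ι) (f : ι → Polynomial ℚ)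
    (h : ∀ i ∈ s, f i ≠ 0) :
    (∏ i ∈ s, f i).natTrailingDegree = ∑ i ∈ s, (f i).natTrailingDegree := by
  induction s using Finset.cons_induction with
  | empty => simp
  | cons a s ha ih =>
    rw [Finset.prod_cons, Finset.sum_cons,
      Polynomial.natTrailingDegree_mul (h a (Finset.mem_cons_self a s))
        (Finset.prod_ne_zero_iff.mpr fun i hi => h i (Finset.mem_cons_of_mem hi)),
      ih fun i hi => h i (Finset.mem_cons_of_mem hi)]

variable (σ : Equiv.Perm (Fin n))

/-- Exponents: `e i = n - σ⁻¹(i)`, so that `e` is decreasing along `σ`. -/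
def ee (i : Fin n) : ℕ := n - (σ.symm i : ℕ)

/-- Substitution `x_i ↦ t^{e i}`. -/
noncomputable def Ψ : MvPolynomial (Fin n) ℚ →ₐ[ℚ] Polynomial ℚ :=
  MvPolynomial.aeval (fun i => (Polynomial.X : Polynomial ℚ) ^ ee n σ i)

noncomputable def qq (ρ : Equiv.Perm (Fin n)) (j : ℕ) : Polynomial ℚ := Ψ n σ (LL n ρ j)

lemma qq_eq (ρ : Equiv.Perm (Fin n)) (j : ℕ) :
    qq n σ ρ j = ∑ t ∈ F n j, (Polynomial.X : Polynomial ℚ) ^ ee n σ (ρ t) := by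
  rw [qq, LL, map_sum]
  simp [Ψ]

/-- `MM ρ j = max_{t ≤ j} σ⁻¹(ρ t)`. -/
def MM (ρ : Equiv.Perm (Fin n)) (j : ℕ) : ℕ :=
  (F n j).sup (fun t => (σ.symm (ρ t) : ℕ))

lemma MM_lt (hn : 0 < n) (ρ : Equiv.Perm (Fin n)) (j : ℕ) : MM n σ ρ j < n := by
  rw [MM, Finset.sup_lt_iff (by exact hn)]
  exact fun t _ => (σ.symm (ρ t)).isLt

lemma coeff_qq_eq_zero (ρ : Equiv.Perm (Fin n)) (j : ℕ) {k : ℕ}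
    (hk : k < n - MM n σ ρ j) : (qq n σ ρ j).coeff k = 0 := by
  rw [qq_eq, Polynomial.finset_sum_coeff]
  refine Finset.sum_eq_zero fun t ht => ?_
  rw [Polynomial.coeff_X_pow, if_neg]
  have h1 : (σ.symm (ρ t) : ℕ) ≤ MM n σ ρ j := by
    rw [MM]; exact Finset.le_sup (f := fun t => (σ.symm (ρ t) : ℕ)) ht
  have h2 : (σ.symm (ρ t) : ℕ) < n := (σ.symm (ρ t)).isLt
  rw [ee]; omega

lemma coeff_qq_min (hn : 0 < n) (ρ : Equiv.Perm (Fin n)) (j : ℕ) :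
    (qq n σ ρ j).coeff (n - MM n σ ρ j) = 1 := by
  obtain ⟨t₀, ht₀, hsup⟩ := Finset.exists_mem_eq_sup (F n j) (F_nonempty n hn j)
    (fun t => (σ.symm (ρ t) : ℕ))
  have hMlt : MM n σ ρ j < n := MM_lt n σ hn ρ j
  rw [qq_eq, Polynomial.finset_sum_coeff, Finset.sum_eq_single t₀]
  · rw [Polynomial.coeff_X_pow, if_pos]
    rw [ee, MM, hsup]
  · intro t ht hne
    rw [Polynomial.coeff_X_pow, if_neg]
    intro heq
    have h1 : (σ.symm (ρ t) : ℕ) ≤ MM n σ ρ j := by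
      rw [MM]; exact Finset.le_sup (f := fun t => (σ.symm (ρ t) : ℕ)) ht
    have h2 : (σ.symm (ρ t) : ℕ) < n := (σ.symm (ρ t)).isLt
    have h3 : (σ.symm (ρ t) : ℕ) = MM n σ ρ j := by rw [ee] at heq; omega
    have h4 : σ.symm (ρ t) = σ.symm (ρ t₀) := by
      ext; rw [h3, MM, hsup]
    exact hne (ρ.injective (σ.symm.injective h4))
  · intro h; exact absurd ht₀ h

lemma qq_ne_zero (hn : 0 < n) (ρ : Equiv.Perm (Fin n)) (j : ℕ) : qq n σ ρ j ≠ 0 := by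
  intro h
  have := coeff_qq_min n σ hn ρ j
  rw [h] at this
  simp at this

lemma ntd_qq (hn : 0 < n) (ρ : Equiv.Perm (Fin n)) (j : ℕ) :
    (qq n σ ρ j).natTrailingDegree = n - MM n σ ρ j := by
  refine le_antisymm (Polynomial.natTrailingDegree_le_of_ne_zero ?_)
    (Polynomial.le_natTrailingDegree (qq_ne_zero n σ hn ρ j)
      (fun m hm => coeff_qq_eq_zero n σ ρ j hm))
  rw [coeff_qq_min n σ hn ρ j]
  exact one_ne_zero

lemma Ψ_dd (ρ : Equiv.Perm (Fin n)) :
    Ψ n σ (dd n ρ) = ∏ j ∈ Finset.range (n - 1), qq n σ ρ j := by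
  rw [dd, map_prod]
  rfl

lemma Ψ_dd_ne_zero (ρ : Equiv.Perm (Fin n)) : Ψ n σ (dd n ρ) ≠ 0 := by
  rw [Ψ_dd, Finset.prod_ne_zero_iff]
  intro j hj
  exact qq_ne_zero n σ (by have := Finset.mem_range.mp hj; omega) ρ j

/-- Pole-order total for `ρ` (under the `σ`-substitution). -/
def tau (ρ : Equiv.Perm (Fin n)) : ℕ :=
  ∑ j ∈ Finset.range (n - 1), (n - MM n σ ρ j)

lemma ntd_Ψ_dd (ρ : Equiv.Perm (Fin n)) :
    (Ψ n σ (dd n ρ)).natTrailingDegree = tau n σ ρ := by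
  rw [Ψ_dd, ntd_prod _ _ (fun j hj => qq_ne_zero n σ
    (by have := Finset.mem_range.mp hj; omega) ρ j), tau]
  refine Finset.sum_congr rfl fun j hj => ?_
  exact ntd_qq n σ (by have := Finset.mem_range.mp hj; omega) ρ j

lemma MM_ge {j : ℕ} (hj : j < n) (ρ : Equiv.Perm (Fin n)) : j ≤ MM n σ ρ j := by
  by_contra h
  push_neg at h
  have hmaps : ∀ t ∈ F n j,
      σ.symm (ρ t) ∈ Finset.univ.filter (fun s : Fin n => (s : ℕ) < j) := by
    intro t ht
    simp only [Finset.mem_filter, Finset.mem_univ, true_and]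
    exact lt_of_le_of_lt (Finset.le_sup (f := fun t => (σ.symm (ρ t) : ℕ)) ht) h
  have hsub : Finset.univ.filter (fun s : Fin n => (s : ℕ) < j) ⊆
      (F n j).erase ⟨j, hj⟩ := by
    intro s hs
    simp only [Finset.mem_filter, Finset.mem_univ, true_and] at hs
    rw [Finset.mem_erase]
    constructor
    · intro hEq; rw [hEq] at hs; simp at hs
    · simp [F]; omega
  have hcard : (Finset.univ.filter (fun s : Fin n => (s : ℕ) < j)).card < (F n j).card := by
    have h1 := Finset.card_le_card hsub
    rw [Finset.card_erase_of_mem (by simp [F]), card_F n hj] at h1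
    rw [card_F n hj]
    omega
  obtain ⟨t1, ht1, t2, ht2, hne, heq⟩ :=
    Finset.exists_ne_map_eq_of_card_lt_of_maps_to hcard hmaps
  exact hne (ρ.injective (σ.symm.injective heq))

lemma MM_self {j : ℕ} (hj : j < n) : MM n σ σ j = j := by
  refine le_antisymm ?_ ?_
  · refine Finset.sup_le fun t ht => ?_
    have : (t : ℕ) ≤ j := by simpa [F] using ht
    simpa using this
  · rw [MM]
    simp only [Equiv.symm_apply_apply]
    have h1 : (⟨j, hj⟩ : Fin n) ∈ F n j := by simp [F]
    exact Finset.le_sup (f := fun t : Fin n => (t : ℕ)) h1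

lemma tau_lt {ρ : Equiv.Perm (Fin n)} (hρ : ρ ≠ σ) : tau n σ ρ < tau n σ σ := by
  have hex : ∃ m : ℕ, ∃ h : m < n, σ.symm (ρ ⟨m, h⟩) ≠ ⟨m, h⟩ := by
    by_contra hall
    push_neg at hall
    apply hρ
    ext t
    have h1 : σ.symm (ρ t) = t := by simpa using hall (t : ℕ) t.isLt
    have h2 := congrArg σ h1
    rw [Equiv.apply_symm_apply] at h2
    rw [h2]
  classical
  let j₀ := Nat.find hex
  obtain ⟨hj₀n, hj₀ne⟩ : ∃ h : j₀ < n, σ.symm (ρ ⟨j₀, h⟩) ≠ ⟨j₀, h⟩ := Nat.find_spec hex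
  set k : Fin n := σ.symm (ρ ⟨j₀, hj₀n⟩) with hk
  have hkgt : j₀ < (k : ℕ) := by
    rcases lt_trichotomy (k : ℕ) j₀ with h | h | h
    · exfalso
      have hmin := Nat.find_min hex (m := (k : ℕ)) h
      push_neg at hmin
      have h5 := hmin k.isLt
      have h6 : (⟨(k : ℕ), k.isLt⟩ : Fin n) = k := by ext; rfl
      rw [h6] at h5
      have h7 : σ.symm (ρ k) = σ.symm (ρ ⟨j₀, hj₀n⟩) := by rw [h5, hk]
      have h8 := ρ.injective (σ.symm.injective h7)
      have h9 : (k : ℕ) = j₀ := by rw [h8]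
      omega
    · exact absurd (by ext; exact h) hj₀ne
    · exact h
  have hj₀small : j₀ < n - 1 := by have := k.isLt; omega
  have hMMbig : j₀ + 1 ≤ MM n σ ρ j₀ := by
    have h1 : (⟨j₀, hj₀n⟩ : Fin n) ∈ F n j₀ := by simp [F]
    have h2 : (k : ℕ) ≤ MM n σ ρ j₀ := by
      rw [MM]; exact Finset.le_sup (f := fun t => (σ.symm (ρ t) : ℕ)) h1
    omega
  rw [tau, tau]
  refine Finset.sum_lt_sum (fun j hj => ?_) ⟨j₀, Finset.mem_range.mpr hj₀small, ?_⟩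
  · have hjn : j < n := by have := Finset.mem_range.mp hj; omega
    show n - MM n σ ρ j ≤ n - MM n σ σ j
    rw [MM_self n σ hjn]
    exact Nat.sub_le_sub_left (MM_ge n σ hjn ρ) n
  · show n - MM n σ ρ j₀ < n - MM n σ σ j₀
    rw [MM_self n σ (by omega)]
    omega

end TrailingDeg

end ZinbielAux

/-- the `n!` rational functions
`∏_{j=1}^{n-1} 1/(x_{ρ(1)}+⋯+x_{ρ(j)})`, `ρ ∈ S_n`, are linearly independent
over `ℚ` in `ℚ(x₁,…,xₙ)`. -/
theorem zinbiel_basis_linearIndependent (n : ℕ) :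
    LinearIndependent ℚ (zinbielBasisElt n) := by
  classical
  rw [Fintype.linearIndependent_iff]
  intro c hc σ
  set K := FractionRing (MvPolynomial (Fin n) ℚ) with hK
  set φ := algebraMap (MvPolynomial (Fin n) ℚ) K with hφ
  set g : Equiv.Perm (Fin n) → MvPolynomial (Fin n) ℚ :=
    fun ρ => ∏ ρ' ∈ Finset.univ.erase ρ, ZinbielAux.dd n ρ' with hg
  have hsm : ∀ (q : ℚ) (p : MvPolynomial (Fin n) ℚ), φ (q • p) = q • φ p := by
    intro q p
    have h1 := ratCast_smul_eq (E := K) ℚ K q (φ p)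
    rw [Rat.cast_id] at h1
    rw [MvPolynomial.smul_eq_C_mul, map_mul, h1, smul_eq_mul]
    congr 1
    exact eq_ratCast (φ.comp MvPolynomial.C) q
  have hrelK : ∑ ρ : Equiv.Perm (Fin n), c ρ • φ (g ρ) = 0 := by
    have hthis := congrArg
      (· * φ (∏ ρ' : Equiv.Perm (Fin n), ZinbielAux.dd n ρ')) hc
    simp only [zero_mul, Finset.sum_mul] at hthis
    rw [← hthis]
    refine Finset.sum_congr rfl fun ρ _ => ?_
    have hdd0 : φ (ZinbielAux.dd n ρ) ≠ 0 :=
      (map_ne_zero_iff φ (IsFractionRing.injective _ _)).mpr (ZinbielAux.dd_ne_zero n ρ)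
    have hDsplit : (∏ ρ' : Equiv.Perm (Fin n), ZinbielAux.dd n ρ')
        = ZinbielAux.dd n ρ * g ρ :=
      (Finset.mul_prod_erase _ _ (Finset.mem_univ ρ)).symm
    rw [smul_mul_assoc, ZinbielAux.zinbiel_eq, hDsplit, map_mul,
      inv_mul_cancel_left₀ hdd0]
  have hrelA : ∑ ρ : Equiv.Perm (Fin n), c ρ • g ρ = 0 := by
    apply IsFractionRing.injective (MvPolynomial (Fin n) ℚ) K
    rw [map_sum, map_zero]
    rw [← hrelK]
    exact Finset.sum_congr rfl fun ρ _ => hsm (c ρ) (g ρ)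
  have hrelP : ∑ ρ : Equiv.Perm (Fin n), c ρ • ZinbielAux.Ψ n σ (g ρ) = 0 := by
    have hthis := congrArg (ZinbielAux.Ψ n σ) hrelA
    rw [map_sum, map_zero] at hthis
    rw [← hthis]
    exact Finset.sum_congr rfl fun ρ _ => (map_smul (ZinbielAux.Ψ n σ) (c ρ) (g ρ)).symm
  have hΨg : ∀ ρ : Equiv.Perm (Fin n), ZinbielAux.Ψ n σ (g ρ)
      = ∏ ρ' ∈ Finset.univ.erase ρ, ZinbielAux.Ψ n σ (ZinbielAux.dd n ρ') :=
    fun ρ => map_prod _ _ _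
  have hne : ∀ ρ : Equiv.Perm (Fin n), ZinbielAux.Ψ n σ (g ρ) ≠ 0 := fun ρ => by
    rw [hΨg]
    exact Finset.prod_ne_zero_iff.mpr fun ρ' _ => ZinbielAux.Ψ_dd_ne_zero n σ ρ'
  have hntd : ∀ ρ : Equiv.Perm (Fin n), (ZinbielAux.Ψ n σ (g ρ)).natTrailingDegree
      = ∑ ρ' ∈ Finset.univ.erase ρ, ZinbielAux.tau n σ ρ' := fun ρ => by
    rw [hΨg, ZinbielAux.ntd_prod _ _ (fun ρ' _ => ZinbielAux.Ψ_dd_ne_zero n σ ρ')]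
    exact Finset.sum_congr rfl fun ρ' _ => ZinbielAux.ntd_Ψ_dd n σ ρ'
  set M := (ZinbielAux.Ψ n σ (g σ)).natTrailingDegree with hM
  have hcoeff := congrArg (fun p => Polynomial.coeff p M) hrelP
  simp only [Polynomial.finset_sum_coeff, Polynomial.coeff_smul,
    Polynomial.coeff_zero] at hcoeff
  rw [Finset.sum_eq_single σ] at hcoeff
  · have hc0 : (ZinbielAux.Ψ n σ (g σ)).coeff M ≠ 0 := by
      rw [hM]
      exact Polynomial.trailingCoeff_nonzero_iff_nonzero.mpr (hne σ)
    rcases smul_eq_zero.mp hcoeff with h | h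
    · exact h
    · exact absurd h hc0
  · intro ρ _ hρne
    have hz : (ZinbielAux.Ψ n σ (g ρ)).coeff M = 0 := by
      apply Polynomial.coeff_eq_zero_of_lt_natTrailingDegree
      rw [hM, hntd ρ, hntd σ]
      have h1 : ZinbielAux.tau n σ ρ < ZinbielAux.tau n σ σ := ZinbielAux.tau_lt n σ hρne
      have h2 := Finset.add_sum_erase Finset.univ (ZinbielAux.tau n σ) (Finset.mem_univ ρ)
      have h3 := Finset.add_sum_erase Finset.univ (ZinbielAux.tau n σ) (Finset.mem_univ σ)
      omega
    rw [hz, smul_zero]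
  · intro h; exact absurd (Finset.mem_univ σ) h
end

section
/- Let $\mathfrak{g}$ be a Lie algebra over a field of characteristic zero, and let $(f_i)_{i\ge1}$, $(\lambda_i)_{i\ge1}$ be elements of $\mathfrak{g}$ and $d \in \mathfrak{g}$ satisfying for all $n \ge 1$: $[f_n, d] = \lambda_n - \sum_{i+j=n,\ i,j\ge1} \frac{1}{j}[f_i, \lambda_j]$. Then for all $k \ge 1$ and $n \ge 1$: $\sum_{i_1+\cdots+i_k=n} \left(\prod_{j=1}^{k}\frac{1}{i_1+\cdots+i_j}\right) \mathrm{ad}_{f_{i_k}}\cdots\mathrm{ad}_{f_{i_1}}(d) = \sum_{i_1+\cdots+i_k=n} \left(\prod_{j=1}^{k}\frac{1}{i_1+\cdots+i_j}\right)\mathrm{ad}_{f_{i_k}}\cdots\mathrm{ad}_{f_{i_2}}(\lambda_{i_1}) - \sum_{j_0+\cdots+j_k=n}\left(\prod_{j=0}^{k}\frac{1}{j_0+\cdots+j_j}\right)\mathrm{ad}_{f_{j_k}}\cdots\mathrm{ad}_{f_{j_1}}(\lambda_{j_0})$, where all indices in the sums are $\ge 1$. -/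
/-- The coefficient `∏_{j=1}^{k} 1/(i₁ + ⋯ + i_j)` of a composition with blocks
`(i₁, …, i_k)`, valued in a field `K`. -/
noncomputable def compCoeff (K : Type*) [Field K] (l : List ℕ) : K :=
  ∏ j ∈ Finset.range l.length, (((l.take (j + 1)).sum : K))⁻¹

set_option linter.unusedSectionVars false

/-- Finset of lists of `k` positive naturals summing to `n`. -/
def comps : ℕ → ℕ → Finset (List ℕ)
  | 0, n => if n = 0 then {[]} else ∅
  | (k+1), n => (Finset.Icc 1 n).biUnion fun m => (comps k (n - m)).image (· ++ [m])

lemma mem_comps {k n : ℕ} {l : List ℕ} :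
    l ∈ comps k n ↔ l.length = k ∧ l.sum = n ∧ ∀ i ∈ l, 0 < i := by
  induction k generalizing n l with
  | zero =>
    simp only [comps]
    split_ifs with h
    · subst h
      simp only [Finset.mem_singleton, List.length_eq_zero_iff]
      constructor
      · rintro rfl; exact ⟨rfl, by simp, by simp⟩
      · rintro ⟨rfl, -, -⟩; rfl
    · simp only [Finset.notMem_empty, false_iff]
      rintro ⟨h0, hs, -⟩
      rw [List.length_eq_zero_iff] at h0
      subst h0
      simp at hs
      omega
  | succ k ih =>
    simp only [comps, Finset.mem_biUnion, Finset.mem_image, Finset.mem_Icc]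
    constructor
    · rintro ⟨m, ⟨hm1, hmn⟩, l', hl', rfl⟩
      obtain ⟨hlen, hsum, hpos⟩ := ih.1 hl'
      refine ⟨by simp [hlen], by simp [hsum]; omega, ?_⟩
      intro i hi
      rcases List.mem_append.1 hi with h | h
      · exact hpos _ h
      · simp at h; omega
    · rintro ⟨hlen, hsum, hpos⟩
      have hne : l ≠ [] := by intro h; subst h; simp at hlen
      refine ⟨l.getLast hne, ⟨hpos _ (List.getLast_mem hne), ?_⟩, l.dropLast, ?_, ?_⟩
      · have := List.dropLast_append_getLast hne
        have : l.dropLast.sum + l.getLast hne = n := by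
          conv_rhs => rw [← hsum, ← this]
          simp
        omega
      · have hds : l.dropLast.sum + l.getLast hne = n := by
          conv_rhs => rw [← hsum, ← List.dropLast_append_getLast hne]
          simp
        refine ih.2 ⟨by simp [hlen], by omega, ?_⟩
        intro i hi
        exact hpos _ (List.dropLast_subset _ hi)
      · exact List.dropLast_append_getLast hne

lemma comps_zero_right {k : ℕ} (hk : 1 ≤ k) : comps k 0 = ∅ := by
  ext l
  simp only [mem_comps, Finset.notMem_empty, iff_false]
  rintro ⟨hlen, hsum, hpos⟩
  have hne : l ≠ [] := by intro h; subst h; simp at hlen; omega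
  obtain ⟨a, t, rfl⟩ := List.exists_cons_of_ne_nil hne
  have := hpos a (by simp)
  simp at hsum
  omega

lemma comps_one {n : ℕ} (hn : 1 ≤ n) : comps 1 n = {[n]} := by
  ext l
  simp only [mem_comps, Finset.mem_singleton]
  constructor
  · rintro ⟨hlen, hsum, hpos⟩
    obtain ⟨a, rfl⟩ := List.length_eq_one_iff.1 hlen
    simp at hsum
    subst hsum; rfl
  · rintro rfl
    exact ⟨rfl, by simp, by intro i hi; simp at hi; omega⟩

lemma sum_comps_succ {M : Type*} [AddCommMonoid M] (g : List ℕ → M) (k n : ℕ) :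
    ∑ l ∈ comps (k+1) n, g l
      = ∑ m ∈ Finset.Icc 1 n, ∑ l ∈ comps k (n - m), g (l ++ [m]) := by
  rw [show comps (k+1) n = (Finset.Icc 1 n).biUnion
        (fun m => (comps k (n - m)).image (· ++ [m])) from rfl]
  rw [Finset.sum_biUnion]
  · refine Finset.sum_congr rfl fun m _ => ?_
    rw [Finset.sum_image]
    intro a _ b _ h
    simpa using h
  · intro m₁ h₁ m₂ h₂ hne
    simp only [Finset.disjoint_left]
    intro l hl₁ hl₂
    simp only [Finset.mem_image] at hl₁ hl₂
    obtain ⟨a, -, rfl⟩ := hl₁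
    obtain ⟨b, -, hb⟩ := hl₂
    apply hne
    have := congrArg (fun l : List ℕ => l.getLast?) hb
    simp [List.getLast?_append] at this
    exact this.symm ▸ rfl

lemma comp_filter_sum {M : Type*} [AddCommMonoid M] (g : List ℕ → M) (k n : ℕ) :
    ∑ c ∈ Finset.univ.filter (fun c : Composition n => c.length = k), g c.blocks
      = ∑ l ∈ comps k n, g l := by
  refine Finset.sum_bij (fun c _ => c.blocks) ?_ ?_ ?_ ?_
  · intro c hc
    simp only [Finset.mem_filter] at hc
    exact mem_comps.2 ⟨hc.2, c.blocks_sum, fun i hi => c.blocks_pos hi⟩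
  · intro a _ b _ h
    exact Composition.ext h
  · intro l hl
    obtain ⟨hlen, hsum, hpos⟩ := mem_comps.1 hl
    exact ⟨⟨l, fun {i} hi => hpos i hi, hsum⟩, by simp [Finset.mem_filter, Composition.length, hlen], rfl⟩
  · intro c _; rfl

lemma compCoeff_append (K : Type*) [Field K] (l : List ℕ) (m : ℕ) :
    compCoeff K (l ++ [m]) = compCoeff K l * (((l.sum + m : ℕ)) : K)⁻¹ := by
  unfold compCoeff
  rw [List.length_append, List.length_singleton, Finset.prod_range_succ]
  congr 1
  · refine Finset.prod_congr rfl fun j hj => ?_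
    rw [List.take_append_of_le_length (by simpa using Finset.mem_range.1 hj)]
  · rw [List.take_of_length_le (by simp)]
    simp

lemma compCoeff_singleton (K : Type*) [Field K] (m : ℕ) :
    compCoeff K [m] = ((m : K))⁻¹ := by
  simp [compCoeff]

section Main
variable {K L : Type*} [Field K] [CharZero K] [LieRing L] [LieAlgebra K L]

lemma fold_append (f : ℕ → L) (d : L) (m : ℕ) (l : List ℕ) :
    (l ++ [m]).foldl (fun a i => ⁅f i, a⁆) d = ⁅f m, l.foldl (fun a i => ⁅f i, a⁆) d⁆ := by
  simp [List.foldl_append]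

lemma tail_fold_append (f lam : ℕ → L) (m : ℕ) (l : List ℕ) (hl : l ≠ []) :
    (l ++ [m]).tail.foldl (fun a i => ⁅f i, a⁆) (lam (l ++ [m]).headI)
      = ⁅f m, l.tail.foldl (fun a i => ⁅f i, a⁆) (lam l.headI)⁆ := by
  obtain ⟨a, t, rfl⟩ := List.exists_cons_of_ne_nil hl
  simp [List.foldl_append]

lemma ne_nil_of_mem_comps {k s : ℕ} {l : List ℕ} (hk : 1 ≤ k) (hl : l ∈ comps k s) :
    l ≠ [] := by
  obtain ⟨hlen, -, -⟩ := mem_comps.1 hl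
  intro h; subst h; simp at hlen; omega

lemma lie_sum_aux {L : Type*} [LieRing L] {ι : Type*} (x : L) (s : Finset ι) (g : ι → L) :
    ⁅x, ∑ i ∈ s, g i⁆ = ∑ i ∈ s, ⁅x, g i⁆ := by
  induction s using Finset.cons_induction with
  | empty => simp
  | cons a s ha ih => simp [Finset.sum_cons, ih]

lemma key_rec (f : ℕ → L) (v : List ℕ → L) (k n : ℕ) (hk : 1 ≤ k)
    (hv : ∀ (m : ℕ) (l : List ℕ), l ∈ comps k (n - m) → v (l ++ [m]) = ⁅f m, v l⁆) :
    ∑ l ∈ comps (k+1) n, compCoeff K l • v l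
      = ∑ m ∈ Finset.Ioo 0 n,
          ((n : K))⁻¹ • ⁅f m, ∑ l ∈ comps k (n - m), compCoeff K l • v l⁆ := by
  rw [sum_comps_succ]
  rw [← Finset.sum_subset (s₁ := Finset.Ioo 0 n) (by intro x hx; simp at hx ⊢; omega)
      (by
        intro m hm hm'
        simp only [Finset.mem_Icc] at hm
        simp only [Finset.mem_Ioo] at hm'
        have : m = n := by omega
        subst this
        rw [Nat.sub_self, comps_zero_right hk, Finset.sum_empty])]
  refine Finset.sum_congr rfl fun m hm => ?_
  rw [lie_sum_aux, Finset.smul_sum]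
  refine Finset.sum_congr rfl fun l hl => ?_
  obtain ⟨hlen, hsum, hpos⟩ := mem_comps.1 hl
  have hm' := Finset.mem_Ioo.1 hm
  rw [hv m l hl, compCoeff_append]
  have hsn : l.sum + m = n := by omega
  rw [hsn, lie_smul, smul_smul, mul_comm (compCoeff K l)]


theorem telescoping_identity'
    (f lam : ℕ → L) (d : L)
    (hyp : ∀ n : ℕ, 1 ≤ n →
      ⁅f n, d⁆ = lam n - ∑ i ∈ Finset.Ioo 0 n,
        (((n - i : ℕ) : K))⁻¹ • ⁅f i, lam (n - i)⁆) :
    ∀ k n : ℕ, 1 ≤ k → 1 ≤ n →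
      ∑ l ∈ comps k n, compCoeff K l • l.foldl (fun a i => ⁅f i, a⁆) d
        = (∑ l ∈ comps k n,
            compCoeff K l • l.tail.foldl (fun a i => ⁅f i, a⁆) (lam l.headI))
          - ∑ l ∈ comps (k+1) n,
              compCoeff K l • l.tail.foldl (fun a i => ⁅f i, a⁆) (lam l.headI) := by
  intro k
  induction k with
  | zero => intro n hk; omega
  | succ k ih =>
    intro n _ hn
    rcases Nat.eq_zero_or_pos k with rfl | hk
    · -- base case k+1 = 1
      have hA2 : ∑ l ∈ comps 2 n,
            compCoeff K l • l.tail.foldl (fun a i => ⁅f i, a⁆) (lam l.headI)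
          = ∑ m ∈ Finset.Ioo 0 n,
              ((n : K))⁻¹ • ⁅f m, ∑ l ∈ comps 1 (n - m),
                compCoeff K l • l.tail.foldl (fun a i => ⁅f i, a⁆) (lam l.headI)⁆ :=
        key_rec f _ 1 n le_rfl
          (fun m l hl => tail_fold_append f lam m l (ne_nil_of_mem_comps le_rfl hl))
      rw [comps_one hn, hA2, Finset.sum_singleton, Finset.sum_singleton,
        compCoeff_singleton]
      simp only [List.foldl_cons, List.foldl_nil, List.tail_cons, List.headI]
      rw [hyp n hn, smul_sub]
      congr 1
      rw [Finset.smul_sum]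
      refine Finset.sum_congr rfl fun m hm => ?_
      have hm' := Finset.mem_Ioo.1 hm
      rw [comps_one (by omega), Finset.sum_singleton, compCoeff_singleton]
      simp only [List.tail_cons, List.foldl_nil, List.headI]
      rw [lie_smul, smul_smul]
    · -- inductive step
      rw [key_rec f _ k n hk (fun m l _ => fold_append f d m l),
        key_rec f _ k n hk
          (fun m l hl => tail_fold_append f lam m l (ne_nil_of_mem_comps hk hl)),
        key_rec f _ (k+1) n (by omega)
          (fun m l hl => tail_fold_append f lam m l (ne_nil_of_mem_comps (by omega) hl)),
        ← Finset.sum_sub_distrib]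
      refine Finset.sum_congr rfl fun m hm => ?_
      have hm' := Finset.mem_Ioo.1 hm
      rw [ih (n - m) hk (by omega), lie_sub, smul_sub]

end Main


/-- the telescoping identity.  If `[f_n, d] = λ_n - ∑_{i+j=n} (1/j)[f_i, λ_j]`
for all `n ≥ 1`, then for all `k, n ≥ 1`,
`∑_{i₁+⋯+i_k=n} (∏_j 1/(i₁+⋯+i_j)) ad_{f_{i_k}}⋯ad_{f_{i_1}}(d)
  = ∑_{i₁+⋯+i_k=n} (∏_j 1/(i₁+⋯+i_j)) ad_{f_{i_k}}⋯ad_{f_{i_2}}(λ_{i_1})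
    - ∑_{j₀+⋯+j_k=n} (∏_j 1/(j₀+⋯+j_j)) ad_{f_{j_k}}⋯ad_{f_{j_1}}(λ_{j₀})`. -/
theorem telescoping_identity
    (K : Type*) (L : Type*) [Field K] [CharZero K] [LieRing L] [LieAlgebra K L]
    (f lam : ℕ → L) (d : L)
    (hyp : ∀ n : ℕ, 1 ≤ n →
      ⁅f n, d⁆ = lam n - ∑ i ∈ Finset.Ioo 0 n,
        (((n - i : ℕ) : K))⁻¹ • ⁅f i, lam (n - i)⁆) :
    ∀ k n : ℕ, 1 ≤ k → 1 ≤ n →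
      ∑ c ∈ Finset.univ.filter (fun c : Composition n => c.length = k),
          compCoeff K c.blocks • c.blocks.foldl (fun a i => ⁅f i, a⁆) d
        = (∑ c ∈ Finset.univ.filter (fun c : Composition n => c.length = k),
            compCoeff K c.blocks •
              c.blocks.tail.foldl (fun a i => ⁅f i, a⁆) (lam c.blocks.headI))
          - ∑ c ∈ Finset.univ.filter (fun c : Composition n => c.length = k + 1),
              compCoeff K c.blocks •
                c.blocks.tail.foldl (fun a i => ⁅f i, a⁆) (lam c.blocks.headI) := by
  intro k n hk hn
  rw [comp_filter_sum (fun l => compCoeff K l • l.foldl (fun a i => ⁅f i, a⁆) d) k n,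
    comp_filter_sum (fun l => compCoeff K l •
      l.tail.foldl (fun a i => ⁅f i, a⁆) (lam l.headI)) k n,
    comp_filter_sum (fun l => compCoeff K l •
      l.tail.foldl (fun a i => ⁅f i, a⁆) (lam l.headI)) (k+1) n]
  exact telescoping_identity' f lam d hyp k n hk hn
end
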